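/- Recursive extension formula (Theorem 2): let Ω_{[1,n+1]} be the first n+1 points of Ω and r ∈ {1,…,n}. Then MMJ(Ω_{n+1}, Ω_r | Ω_{[1,n+1]}) = min over t ∈ {1,…,n} of max( d(Ω_{n+1}, Ω_t), MMJ(Ω_t, Ω_r | Ω_{[1,n]}) ). -/

import Mathlib

/-- The maximum jump (distance between consecutive points) along a list of points. -/
def maxJump {α : Type*} (d : α → α → ℝ) : List α → ℝ
  | a :: b :: l => max (d a b) (maxJump d (b :: l))
  | _ => 0

/-- `L` is a path from `i` to `j` all of whose points lie in `S`. -/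
def IsPathIn {α : Type*} (S : Set α) (i j : α) (L : List α) : Prop :=
  L.head? = some i ∧ L.getLast? = some j ∧ ∀ x ∈ L, x ∈ S

/-- Min-Max-Jump distance between `i` and `j` under the context `S`. -/
noncomputable def MMJ {α : Type*} (d : α → α → ℝ) (S : Set α) (i j : α) : ℝ :=
  sInf {m : ℝ | ∃ L : List α, IsPathIn S i j L ∧ maxJump d L = m}

lemma maxJump_nonneg {α : Type*} [MetricSpace α] (L : List α) : 0 ≤ maxJump dist L := by
  match L with
  | [] => simp [maxJump]
  | [a] => simp [maxJump]
  | a :: b :: l => simpa [maxJump] using Or.inl dist_nonneg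

lemma mmj_bddBelow {α : Type*} [MetricSpace α] (S : Set α) (i j : α) :
    BddBelow {m : ℝ | ∃ L : List α, IsPathIn S i j L ∧ maxJump dist L = m} :=
  ⟨0, fun m ⟨L, _, hL⟩ => hL ▸ maxJump_nonneg L⟩

lemma mmj_le {α : Type*} [MetricSpace α] {S : Set α} {i j : α} {L : List α}
    (h : IsPathIn S i j L) : MMJ dist S i j ≤ maxJump dist L :=
  csInf_le (mmj_bddBelow S i j) ⟨L, h, rfl⟩

lemma maxJump_cons {α : Type*} [MetricSpace α] (a b : α) (l : List α) :
    maxJump dist (a :: b :: l) = max (dist a b) (maxJump dist (b :: l)) := by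
  simp [maxJump]

/-- Prepending a point to near-optimal paths. -/
lemma mmj_prepend {α : Type*} [MetricSpace α] {S T : Set α} (hST : S ⊆ T)
    {x y j : α} (hx : x ∈ T) (hy : y ∈ S) (hj : j ∈ S) :
    MMJ dist T x j ≤ max (dist x y) (MMJ dist S y j) := by
  refine le_of_forall_pos_le_add fun ε hε => ?_
  have hne : {m : ℝ | ∃ L : List α, IsPathIn S y j L ∧ maxJump dist L = m}.Nonempty := by
    refine ⟨maxJump dist [y, j], [y, j], ⟨rfl, rfl, ?_⟩, rfl⟩
    intro z hz; simp at hz; rcases hz with rfl | rfl <;> assumption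
  obtain ⟨m, ⟨L, ⟨hhead, hlast, hmem⟩, rfl⟩, hm⟩ :=
    exists_lt_of_csInf_lt hne (lt_add_of_pos_right (MMJ dist S y j) hε)
  obtain ⟨b, L', rfl⟩ : ∃ b L', L = b :: L' := by
    cases L with
    | nil => simp at hhead
    | cons b L' => exact ⟨b, L', rfl⟩
  obtain rfl : b = y := by simpa using hhead
  have hpath : IsPathIn T x j (x :: b :: L') := by
    refine ⟨rfl, by simpa using hlast, ?_⟩
    intro z hz
    rcases List.mem_cons.mp hz with rfl | hz
    · exact hx
    · exact hST (hmem z hz)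
  calc MMJ dist T x j ≤ maxJump dist (x :: b :: L') := mmj_le hpath
    _ = max (dist x b) (maxJump dist (b :: L')) := maxJump_cons x b L'
    _ ≤ max (dist x b) (MMJ dist S b j + ε) := by
        exact max_le_max le_rfl hm.le
    _ ≤ max (dist x b) (MMJ dist S b j) + ε := by
        rcases le_total (dist x b) (MMJ dist S b j + ε) with h | h
        · rw [max_eq_right h]
          exact add_le_add_left (le_max_right _ _) ε
        · rw [max_eq_left h]
          exact le_add_of_le_of_nonneg (le_max_left _ _) hε.le

lemma key {α : Type*} [MetricSpace α] (Ω : ℕ → α) (n r : ℕ) (hr : r ∈ Set.Icc 1 n) :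
    ∀ M : List α, M.getLast? = some (Ω r) → (∀ x ∈ M, x ∈ Ω '' Set.Icc 1 (n + 1)) →
      ∀ x, M.head? = some x →
      ((x = Ω (n + 1) → ∃ t ∈ Set.Icc 1 n, dist (Ω (n + 1)) (Ω t) ≤ maxJump dist M ∧
          MMJ dist (Ω '' Set.Icc 1 n) (Ω t) (Ω r) ≤ maxJump dist M) ∧
       (x ∈ Ω '' Set.Icc 1 n → MMJ dist (Ω '' Set.Icc 1 n) x (Ω r) ≤ maxJump dist M ∨
          ∃ t ∈ Set.Icc 1 n, dist (Ω (n + 1)) (Ω t) ≤ maxJump dist M ∧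
          MMJ dist (Ω '' Set.Icc 1 n) (Ω t) (Ω r) ≤ maxJump dist M)) := by
  intro M
  induction M with
  | nil => intro h; simp at h
  | cons a rest ih =>
    intro hlast hmem x hx
    have hxa : x = a := by simpa using hx.symm
    subst hxa
    cases rest with
    | nil =>
      -- single point path: x = Ω r
      have har : x = Ω r := by simpa using hlast
      constructor
      · intro ha
        -- x = Ω (n+1) = Ω r; still must produce t. Use t = r.
        refine ⟨r, hr, ?_, ?_⟩
        · rw [← har, ha]; simp [maxJump]
        · have : IsPathIn (Ω '' Set.Icc 1 n) (Ω r) (Ω r) [Ω r] :=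
            ⟨rfl, rfl, by simp; exact ⟨r, hr, rfl⟩⟩
          simpa [maxJump] using mmj_le this
      · intro _
        left
        subst har
        have : IsPathIn (Ω '' Set.Icc 1 n) (Ω r) (Ω r) [Ω r] :=
          ⟨rfl, rfl, by simp; exact ⟨r, hr, rfl⟩⟩
        simpa [maxJump] using mmj_le this
    | cons b rest' =>
      have hlast' : (b :: rest').getLast? = some (Ω r) := by
        simpa [List.getLast?_cons_cons] using hlast
      have hmem' : ∀ x ∈ b :: rest', x ∈ Ω '' Set.Icc 1 (n + 1) := fun z hz' =>
        hmem z (List.mem_cons_of_mem _ hz')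
      have ihb := ih hlast' hmem' b rfl
      have hMJ : maxJump dist (x :: b :: rest') =
          max (dist x b) (maxJump dist (b :: rest')) := maxJump_cons x b rest'
      have htail_le : maxJump dist (b :: rest') ≤ maxJump dist (x :: b :: rest') := by
        rw [hMJ]; exact le_max_right _ _
      have hjump_le : dist x b ≤ maxJump dist (x :: b :: rest') := by
        rw [hMJ]; exact le_max_left _ _
      -- b is either Ω (n+1) or in small set
      have hbcases : b = Ω (n + 1) ∨ b ∈ Ω '' Set.Icc 1 n := by
        obtain ⟨s, hs, rfl⟩ := hmem' b List.mem_cons_self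
        rcases eq_or_lt_of_le hs.2 with h | h
        · left; rw [h]
        · right; exact ⟨s, ⟨hs.1, Nat.lt_succ_iff.mp h⟩, rfl⟩
      constructor
      · intro ha
        rcases hbcases with hb | hb
        · -- b = Ω(n+1) : use IH part (x)
          obtain ⟨t, ht, h1, h2⟩ := ihb.1 hb
          exact ⟨t, ht, h1.trans htail_le, h2.trans htail_le⟩
        · -- b ∈ small
          obtain ⟨s, hs, rfl⟩ := hb
          rcases ihb.2 ⟨s, hs, rfl⟩ with h | ⟨t, ht, h1, h2⟩
          · refine ⟨s, hs, ?_, h.trans htail_le⟩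
            rw [← ha]; exact hjump_le
          · exact ⟨t, ht, h1.trans htail_le, h2.trans htail_le⟩
      · intro hxs
        rcases hbcases with hb | hb
        · -- b = Ω(n+1)
          obtain ⟨t, ht, h1, h2⟩ := ihb.1 hb
          exact Or.inr ⟨t, ht, h1.trans htail_le, h2.trans htail_le⟩
        · rcases ihb.2 hb with h | ⟨t, ht, h1, h2⟩
          · left
            have hrS : Ω r ∈ Ω '' Set.Icc 1 n := ⟨r, hr, rfl⟩
            calc MMJ dist (Ω '' Set.Icc 1 n) x (Ω r)
                ≤ max (dist x b) (MMJ dist (Ω '' Set.Icc 1 n) b (Ω r)) :=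
                  mmj_prepend (le_refl _) hxs hb hrS
              _ ≤ max (dist x b) (maxJump dist (b :: rest')) := max_le_max le_rfl h
              _ = maxJump dist (x :: b :: rest') := hMJ.symm
          · exact Or.inr ⟨t, ht, h1.trans htail_le, h2.trans htail_le⟩

theorem mmj_recursion {α : Type*} [MetricSpace α] (Ω : ℕ → α)
    (n : ℕ) (hn : 1 ≤ n) (hinj : Set.InjOn Ω (Set.Icc 1 (n + 1)))
    (r : ℕ) (hr : r ∈ Finset.Icc 1 n) :
    MMJ dist (Ω '' Set.Icc 1 (n + 1)) (Ω (n + 1)) (Ω r) =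
      (Finset.Icc 1 n).inf' (Finset.nonempty_Icc.mpr hn)
        (fun t => max (dist (Ω (n + 1)) (Ω t))
          (MMJ dist (Ω '' Set.Icc 1 n) (Ω t) (Ω r))) := by
  have hrS : r ∈ Set.Icc 1 n := by
    rw [Finset.mem_Icc] at hr; exact hr
  have hsub : Ω '' Set.Icc 1 n ⊆ Ω '' Set.Icc 1 (n + 1) :=
    Set.image_mono (Set.Icc_subset_Icc le_rfl (Nat.le_succ n))
  have hbig : Ω (n + 1) ∈ Ω '' Set.Icc 1 (n + 1) :=
    ⟨n + 1, ⟨Nat.le_add_left 1 n, le_rfl⟩, rfl⟩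
  have hrmem : Ω r ∈ Ω '' Set.Icc 1 n := ⟨r, hrS, rfl⟩
  apply le_antisymm
  · apply Finset.le_inf'
    intro t ht
    rw [Finset.mem_Icc] at ht
    exact mmj_prepend hsub hbig ⟨t, ht, rfl⟩ hrmem
  · have hne : {m : ℝ | ∃ L : List α,
        IsPathIn (Ω '' Set.Icc 1 (n + 1)) (Ω (n + 1)) (Ω r) L ∧ maxJump dist L = m}.Nonempty := by
      refine ⟨_, [Ω (n + 1), Ω r], ⟨rfl, rfl, ?_⟩, rfl⟩
      intro z hz; simp at hz
      rcases hz with rfl | rfl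
      · exact hbig
      · exact hsub hrmem
    refine le_csInf hne ?_
    rintro m ⟨L, ⟨hhead, hlast, hmem⟩, rfl⟩
    obtain ⟨t, ht, h1, h2⟩ := (key Ω n r hrS L hlast hmem (Ω (n + 1)) hhead).1 rfl
    calc (Finset.Icc 1 n).inf' (Finset.nonempty_Icc.mpr hn)
          (fun t => max (dist (Ω (n + 1)) (Ω t)) (MMJ dist (Ω '' Set.Icc 1 n) (Ω t) (Ω r)))
        ≤ max (dist (Ω (n + 1)) (Ω t)) (MMJ dist (Ω '' Set.Icc 1 n) (Ω t) (Ω r)) :=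
          Finset.inf'_le _ (Finset.mem_Icc.mpr ht)
      _ ≤ maxJump dist L := max_le h1 h2
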